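/- Let $(\Omega,\mathscr{F},P)$ be a probability space with a sub-$\sigma$-field $\mathscr{F}_s \subset \tilde{\mathscr{F}}_s \subset \mathscr{F}$ and let $\rho$ be a random variable such that the event $\{\rho > s\}$ satisfies: for every $\tilde{A} \in \tilde{\mathscr{F}}_s$ there exists $A \in \mathscr{F}_s$ with $\{\rho > s\} \cap A = \{\rho > s\} \cap \tilde{A}$. Then for any $[0,\infty]$-valued random variable $X$ and any $t \geq s$: $E[X \mathbf{1}_{\{\rho > t\}} \mid \tilde{\mathscr{F}}_s] \cdot P(\rho > s \mid \mathscr{F}_s) = E[X \mathbf{1}_{\{\rho > t\}} \mid \mathscr{F}_s] \cdot P(\rho > s \mid \tilde{\mathscr{F}}_s)$ almost surely. -/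

import Mathlib

open MeasureTheory Set
open scoped ENNReal

/-- `g` is a version of the conditional expectation of the `[0,∞]`-valued random
variable `f` given the sub-σ-field `m'`: it is `m'`-measurable and has the same
integral as `f` over every `m'`-measurable set. -/
def IsLCondExp {Ω : Type*} {mΩ : MeasurableSpace Ω} (μ : Measure Ω)
    (m' : MeasurableSpace Ω) (f g : Ω → ℝ≥0∞) : Prop :=
  Measurable[m'] g ∧ ∀ A : Set Ω, MeasurableSet[m'] A →
    ∫⁻ ω in A, f ω ∂μ = ∫⁻ ω in A, g ω ∂μ

/-- Pull-out property: if `f` and `g` have equal integrals over all `m'`-measurable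
sets, then for any `m'`-measurable `h`, `∫ h * f = ∫ h * g`. -/
lemma pullout {Ω : Type*} {mΩ : MeasurableSpace Ω} (μ : Measure Ω)
    (m' : MeasurableSpace Ω) (hm' : m' ≤ mΩ) {f g : Ω → ℝ≥0∞}
    (hf : Measurable[mΩ] f) (hg : Measurable[mΩ] g)
    (hfg : ∀ A : Set Ω, MeasurableSet[m'] A → ∫⁻ ω in A, f ω ∂μ = ∫⁻ ω in A, g ω ∂μ) :
    ∀ ⦃h : Ω → ℝ≥0∞⦄, Measurable[m'] h →
      ∫⁻ ω, h ω * f ω ∂μ = ∫⁻ ω, h ω * g ω ∂μ := by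
  refine @Measurable.ennreal_induction Ω m'
    (fun h => ∫⁻ ω, h ω * f ω ∂μ = ∫⁻ ω, h ω * g ω ∂μ) ?_ ?_ ?_
  · intro c A hA
    have h1 : ∀ (u : Ω → ℝ≥0∞), (fun ω => (A.indicator (fun _ => c)) ω * u ω)
        = A.indicator (fun ω => c * u ω) := by
      intro u; funext ω
      by_cases hω : ω ∈ A <;> simp [Set.indicator_apply, hω]
    rw [h1 f, h1 g, lintegral_indicator (hm' A hA), lintegral_indicator (hm' A hA),
      lintegral_const_mul c hf, lintegral_const_mul c hg, hfg A hA]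
  · intro h₁ h₂ _ hh₁ hh₂ ih₁ ih₂
    have m₁ : Measurable[mΩ] h₁ := hh₁.mono hm' le_rfl
    have m₂ : Measurable[mΩ] h₂ := hh₂.mono hm' le_rfl
    have e1 : ∀ (u : Ω → ℝ≥0∞), (fun ω => (h₁ + h₂) ω * u ω)
        = fun ω => h₁ ω * u ω + h₂ ω * u ω := by
      intro u; funext ω; simp [add_mul]
    rw [e1 f, e1 g, lintegral_add_left (f := fun ω => h₁ ω * f ω) (m₁.mul hf),
      lintegral_add_left (f := fun ω => h₁ ω * g ω) (m₁.mul hg), ih₁, ih₂]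
  · intro h hmeas hmono ih
    have e1 : ∀ (u : Ω → ℝ≥0∞), (fun ω => (⨆ n, h n ω) * u ω)
        = fun ω => ⨆ n, h n ω * u ω := by
      intro u; funext ω; exact ENNReal.iSup_mul _ _
    have mono' : ∀ (u : Ω → ℝ≥0∞), Monotone fun n ω => h n ω * u ω := by
      intro u n m hnm ω
      exact mul_le_mul_left (hmono hnm ω) _
    rw [e1 f, e1 g,
      lintegral_iSup (f := fun n ω => h n ω * f ω) (fun n => ((hmeas n).mono hm' le_rfl).mul hf) (mono' f),
      lintegral_iSup (f := fun n ω => h n ω * g ω) (fun n => ((hmeas n).mono hm' le_rfl).mul hg) (mono' g)]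
    exact iSup_congr ih

/-- Lemma on the essential identity for conditional expectations:
if every `𝓕̃ₛ`-measurable set agrees with an `𝓕ₛ`-measurable set on `{ρ > s}`, then
`E[X 1_{ρ>t} | 𝓕̃ₛ] ⬝ P(ρ > s | 𝓕ₛ) = E[X 1_{ρ>t} | 𝓕ₛ] ⬝ P(ρ > s | 𝓕̃ₛ)` a.s. for `s ≤ t`. -/
theorem stmt0 {Ω : Type*} [mΩ : MeasurableSpace Ω] (μ : Measure Ω)
    [IsProbabilityMeasure μ]
    (Fs Fs' : MeasurableSpace Ω) (hsub : Fs ≤ Fs') (hsub' : Fs' ≤ mΩ)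
    (ρ : Ω → ℝ≥0∞) (hρ : Measurable[mΩ] ρ)
    (s t : ℝ≥0∞) (hst : s ≤ t)
    (hcompat : ∀ A' : Set Ω, MeasurableSet[Fs'] A' →
      ∃ A : Set Ω, MeasurableSet[Fs] A ∧
        {ω | s < ρ ω} ∩ A = {ω | s < ρ ω} ∩ A')
    (X : Ω → ℝ≥0∞) (hX : Measurable[mΩ] X)
    (E₁ P₁ E₂ P₂ : Ω → ℝ≥0∞)
    (hE₁ : IsLCondExp μ Fs' (fun ω => X ω * ({ω' | t < ρ ω'}).indicator 1 ω) E₁)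
    (hP₁ : IsLCondExp μ Fs (({ω' | s < ρ ω'}).indicator 1) P₁)
    (hE₂ : IsLCondExp μ Fs (fun ω => X ω * ({ω' | t < ρ ω'}).indicator 1 ω) E₂)
    (hP₂ : IsLCondExp μ Fs' (({ω' | s < ρ ω'}).indicator 1) P₂) :
    ∀ᵐ ω ∂μ, E₁ ω * P₁ ω = E₂ ω * P₂ ω := by
  have hsub'' : Fs ≤ mΩ := hsub.trans hsub'
  set S : Set Ω := {ω | s < ρ ω} with hS
  set T : Set Ω := {ω | t < ρ ω} with hT
  have hSmeas : MeasurableSet[mΩ] S := measurableSet_lt measurable_const hρ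
  have hTmeas : MeasurableSet[mΩ] T := measurableSet_lt measurable_const hρ
  set Y : Ω → ℝ≥0∞ := fun ω => X ω * T.indicator 1 ω with hY
  have hYmeas : Measurable[mΩ] Y := hX.mul ((@measurable_one ℝ≥0∞ Ω _ mΩ _).indicator hTmeas)
  have hSind : Measurable[mΩ] (S.indicator (1 : Ω → ℝ≥0∞)) := (@measurable_one ℝ≥0∞ Ω _ mΩ _).indicator hSmeas
  -- measurability of the cond exps w.r.t. the ambient σ-field
  have mE₁ : Measurable[mΩ] E₁ := hE₁.1.mono hsub' le_rfl
  have mP₁ : Measurable[mΩ] P₁ := hP₁.1.mono hsub'' le_rfl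
  have mE₂ : Measurable[mΩ] E₂ := hE₂.1.mono hsub'' le_rfl
  have mP₂ : Measurable[mΩ] P₂ := hP₂.1.mono hsub' le_rfl
  have mE₁' : Measurable[Fs'] E₁ := hE₁.1
  have mP₁' : Measurable[Fs'] P₁ := hP₁.1.mono hsub le_rfl
  have mE₂' : Measurable[Fs'] E₂ := hE₂.1.mono hsub le_rfl
  have mP₂' : Measurable[Fs'] P₂ := hP₂.1
  -- key: equal integrals over Fs'-sets
  have key : ∀ A' : Set Ω, MeasurableSet[Fs'] A' →
      ∫⁻ ω in A', E₁ ω * P₁ ω ∂μ = ∫⁻ ω in A', E₂ ω * P₂ ω ∂μ := by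
    intro A' hA'
    obtain ⟨A, hA, hAA⟩ := hcompat A' hA'
    have memiff : ∀ ω ∈ S, (ω ∈ A ↔ ω ∈ A') := by
      intro ω hω
      constructor
      · intro h; exact ((Set.ext_iff.mp hAA ω).mp ⟨hω, h⟩).2
      · intro h; exact ((Set.ext_iff.mp hAA ω).mpr ⟨hω, h⟩).2
    set I : Ω → ℝ≥0∞ := A.indicator 1 with hI
    set I' : Ω → ℝ≥0∞ := A'.indicator 1 with hI'
    have mI : Measurable[Fs] I := (@measurable_one ℝ≥0∞ Ω _ Fs _).indicator hA
    have mI' : Measurable[Fs'] I' := (@measurable_one ℝ≥0∞ Ω _ Fs' _).indicator hA'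
    -- step 1: ∫_{A'} E₁ P₁ = ∫ (I'·P₁)·E₁
    have step1 : ∫⁻ ω in A', E₁ ω * P₁ ω ∂μ = ∫⁻ ω, (I' ω * P₁ ω) * E₁ ω ∂μ := by
      rw [← lintegral_indicator (hsub' A' hA')]
      refine lintegral_congr fun ω => ?_
      by_cases hω : ω ∈ A' <;> simp [hI', Set.indicator_apply, hω, mul_comm, mul_assoc]
    -- step 2: pull E₁ back to Y over Fs'
    have step2 : ∫⁻ ω, (I' ω * P₁ ω) * E₁ ω ∂μ = ∫⁻ ω, (I' ω * P₁ ω) * Y ω ∂μ :=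
      (pullout μ Fs' hsub' hYmeas mE₁ hE₁.2 ((mI'.mul mP₁'))).symm
    -- step 3: swap I' for I using that Y vanishes off S
    have step3 : ∫⁻ ω, (I' ω * P₁ ω) * Y ω ∂μ = ∫⁻ ω, (I ω * P₁ ω) * Y ω ∂μ := by
      refine lintegral_congr fun ω => ?_
      by_cases hω : ω ∈ S
      · have hind : I ω = I' ω := by
          by_cases h : ω ∈ A'
          · rw [hI, hI', Set.indicator_of_mem ((memiff ω hω).mpr h), Set.indicator_of_mem h]
          · rw [hI, hI', Set.indicator_of_notMem (fun hh => h ((memiff ω hω).mp hh)),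
              Set.indicator_of_notMem h]
        rw [hind]
      · have hωT : ω ∉ T := by
          intro hωT
          exact hω (lt_of_le_of_lt hst hωT)
        simp [hY, Set.indicator_of_notMem hωT]
    -- step 4: pull Y to E₂ over Fs
    have step4 : ∫⁻ ω, (I ω * P₁ ω) * Y ω ∂μ = ∫⁻ ω, (I ω * P₁ ω) * E₂ ω ∂μ := by
      have mh : Measurable[Fs] fun ω => I ω * P₁ ω := mI.mul hP₁.1
      exact pullout μ Fs hsub'' hYmeas mE₂ hE₂.2 mh
    -- step 5: rearrange and pull P₁ back to 1_S over Fs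
    have step5 : ∫⁻ ω, (I ω * P₁ ω) * E₂ ω ∂μ
        = ∫⁻ ω, (I ω * E₂ ω) * S.indicator 1 ω ∂μ := by
      have := (pullout μ Fs hsub'' hSind mP₁ hP₁.2 (h := fun ω => I ω * E₂ ω) (mI.mul hE₂.1)).symm
      rw [← this]
      exact lintegral_congr fun ω => by ring
    -- step 6: swap I for I' using the 1_S factor
    have step6 : ∫⁻ ω, (I ω * E₂ ω) * S.indicator 1 ω ∂μ
        = ∫⁻ ω, (I' ω * E₂ ω) * S.indicator 1 ω ∂μ := by
      refine lintegral_congr fun ω => ?_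
      by_cases hω : ω ∈ S
      · have hind : I ω = I' ω := by
          by_cases h : ω ∈ A'
          · rw [hI, hI', Set.indicator_of_mem ((memiff ω hω).mpr h), Set.indicator_of_mem h]
          · rw [hI, hI', Set.indicator_of_notMem (fun hh => h ((memiff ω hω).mp hh)),
              Set.indicator_of_notMem h]
        rw [hind]
      · simp [Set.indicator_of_notMem hω]
    -- step 7: pull 1_S to P₂ over Fs'
    have step7 : ∫⁻ ω, (I' ω * E₂ ω) * S.indicator 1 ω ∂μ
        = ∫⁻ ω, (I' ω * E₂ ω) * P₂ ω ∂μ :=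
      pullout μ Fs' hsub' hSind mP₂ hP₂.2 (mI'.mul mE₂')
    -- step 8: back to a set integral
    have step8 : ∫⁻ ω, (I' ω * E₂ ω) * P₂ ω ∂μ = ∫⁻ ω in A', E₂ ω * P₂ ω ∂μ := by
      rw [← lintegral_indicator (hsub' A' hA')]
      refine lintegral_congr fun ω => ?_
      by_cases hω : ω ∈ A' <;> simp [hI', Set.indicator_apply, hω, mul_comm, mul_assoc]
    rw [step1, step2, step3, step4, step5, step6, step7, step8]
  -- conclude a.e. equality via the trimmed measure
  set ν := μ.trim hsub' with hν
  haveI : IsFiniteMeasure ν := MeasureTheory.isFiniteMeasure_trim hsub'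
  have hF' : Measurable[Fs'] fun ω => E₁ ω * P₁ ω := mE₁'.mul mP₁'
  have hG' : Measurable[Fs'] fun ω => E₂ ω * P₂ ω := mE₂'.mul mP₂'
  have htrim : (fun ω => E₁ ω * P₁ ω) =ᵐ[ν] fun ω => E₂ ω * P₂ ω := by
    refine ae_eq_of_forall_setLIntegral_eq_of_sigmaFinite (μ := ν) hF' hG' ?_
    intro A hA _
    have h1 : @Measure.restrict Ω Fs' ν A = (μ.restrict A).trim hsub' :=
      restrict_trim hsub' μ hA
    rw [h1, lintegral_trim hsub' hF', lintegral_trim hsub' hG']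
    exact key A hA
  exact ae_eq_of_ae_eq_trim htrim
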